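/- (Lemma 3.5.) For i = 1, …, q let C_i ∈ ℂ^{p_i×p_i} be a matrix in *congruence canonical form given by explicit block data, i.e., C_i = ⊕_j J_{k_j^{(i)}}(0) ⊕ ⊕_j α_j^{(i)}Γ_{ℓ_j^{(i)}} ⊕ ⊕_j H_{2m_j^{(i)}}(μ_j^{(i)}) with |α_j^{(i)}| = 1 and |μ_j^{(i)}| > 1, and let A_i belong to the closure of ℬ*(C_i). Suppose that for all i ≠ j: 𝒮*_{Γ,2}(C_i) ∩ 𝒮*_{Γ,2}(C_j) = ∅, 𝒮*_{Γ,2}(C_i) ∩ 𝒮*_{Γ,2,neg}(C_j) = ∅, and 𝒮*_H(C_i) ∩ 𝒮*_H(C_j) = ∅. Then A_1 ⊕ ⋯ ⊕ A_q belongs to the closure of ℬ*(C_1 ⊕ ⋯ ⊕ C_q). -/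

import Mathlib

open Matrix

noncomputable section

/-- The `k × k` Jordan block `J_k(μ)` (eigenvalue `μ` on the diagonal, `1` on the
superdiagonal). -/
def Jblock (k : ℕ) (μ : ℂ) : Matrix (Fin k) (Fin k) ℂ :=
  Matrix.of fun i j =>
    if (j : ℕ) = (i : ℕ) then μ else if (j : ℕ) = (i : ℕ) + 1 then 1 else 0

/-- The `k × k` matrix `Γ_k`: in 1-based indexing, the `(i,j)` entry is `(-1)^(k-i)`
when `j = k+1-i` or `j = k+2-i`, and `0` otherwise. -/
def Gamma (k : ℕ) : Matrix (Fin k) (Fin k) ℂ :=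
  Matrix.of fun i j =>
    if (i : ℕ) + (j : ℕ) = k - 1 ∨ (i : ℕ) + (j : ℕ) = k then
      (-1 : ℂ) ^ (k - 1 - (i : ℕ)) else 0

/-- Block-diagonal direct sum of two square complex matrices. -/
def dsum {m n : ℕ} (A : Matrix (Fin m) (Fin m) ℂ) (B : Matrix (Fin n) (Fin n) ℂ) :
    Matrix (Fin (m + n)) (Fin (m + n)) ℂ :=
  Matrix.reindex finSumFinEquiv finSumFinEquiv (Matrix.fromBlocks A 0 0 B)

/-- The `2k × 2k` matrix `H_{2k}(μ) = [[0, I_k], [J_k(μ), 0]]`. -/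
def Hblock (k : ℕ) (μ : ℂ) : Matrix (Fin (k + k)) (Fin (k + k)) ℂ :=
  Matrix.reindex finSumFinEquiv finSumFinEquiv (Matrix.fromBlocks 0 1 (Jblock k μ) 0)

/-- The total size of a family of sizes `p : Fin q → ℕ`. -/
def finSize : {q : ℕ} → (Fin q → ℕ) → ℕ
  | 0, _ => 0
  | _ + 1, p => p 0 + finSize fun i => p i.succ

/-- Block-diagonal direct sum of a family of square complex matrices of sizes
`p 0, …, p (q-1)`. -/
def finDsum : {q : ℕ} → (p : Fin q → ℕ) →
    ((i : Fin q) → Matrix (Fin (p i)) (Fin (p i)) ℂ) →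
    Matrix (Fin (finSize p)) (Fin (finSize p)) ℂ
  | 0, _, _ => 0
  | _ + 1, p, M => dsum (M 0) (finDsum (fun i => p i.succ) fun i => M i.succ)

/-- Block data of a matrix in *congruence canonical form
`⊕ J_{k_i}(0) ⊕ ⊕ α_i Γ_{l_i} ⊕ ⊕ H_{2 m_i}(μ_i)`. -/
structure StarData : Type where
  n1 : ℕ
  n2 : ℕ
  n3 : ℕ
  k : Fin n1 → ℕ
  l : Fin n2 → ℕ
  a : Fin n2 → ℂ
  m : Fin n3 → ℕ
  mu : Fin n3 → ℂ

/-- The size of the canonical matrix described by the block data. -/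
def StarData.size (d : StarData) : ℕ :=
  finSize d.k + (finSize d.l + finSize fun i => d.m i + d.m i)

/-- The canonical matrix with the block structure of `d` but with the Type I and
Type II parameters replaced by `a` and `mu`. -/
def StarData.matWith (d : StarData) (a : Fin d.n2 → ℂ) (mu : Fin d.n3 → ℂ) :
    Matrix (Fin d.size) (Fin d.size) ℂ :=
  dsum (finDsum d.k fun i => Jblock (d.k i) 0)
    (dsum (finDsum d.l fun i => a i • Gamma (d.l i))
      (finDsum (fun i => d.m i + d.m i) fun i => Hblock (d.m i) (mu i)))

/-- Validity of the block data: all sizes are at least `1`, `|α_i| = 1` and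
`|μ_i| > 1`. -/
def StarData.Valid (d : StarData) : Prop :=
  (∀ i, 1 ≤ d.k i) ∧ (∀ i, 1 ≤ d.l i) ∧ (∀ i, 1 ≤ d.m i) ∧
    (∀ i, ‖d.a i‖ = 1) ∧ ∀ i, 1 < ‖d.mu i‖

/-- The constraints that the replaced parameters must satisfy in the definition of the
*congruence bundle of `d`. -/
def StarData.ParamsOK (d : StarData) (a : Fin d.n2 → ℂ) (mu : Fin d.n3 → ℂ) : Prop :=
  (∀ i, ‖a i‖ = 1) ∧ (∀ i, 1 < ‖mu i‖) ∧
    (∀ i j, d.l i % 2 = d.l j % 2 → (a i ^ 2 ≠ a j ^ 2 ↔ d.a i ^ 2 ≠ d.a j ^ 2)) ∧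
    (∀ i j, d.l i % 2 ≠ d.l j % 2 → (a i ^ 2 ≠ -(a j ^ 2) ↔ d.a i ^ 2 ≠ -(d.a j ^ 2))) ∧
    ∀ i j, mu i ≠ mu j ↔ d.mu i ≠ d.mu j

/-- The *congruence bundle `ℬ*(C)` of the canonical matrix `C` described by the block
data `d`. -/
def starBundle (d : StarData) : Set (Matrix (Fin d.size) (Fin d.size) ℂ) :=
  {A | ∃ (a : Fin d.n2 → ℂ) (mu : Fin d.n3 → ℂ) (P : Matrix (Fin d.size) (Fin d.size) ℂ),
    IsUnit P ∧ d.ParamsOK a mu ∧ A = P * d.matWith a mu * Pᴴ}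

/-- The parameter set `𝒮*_{Γ,2}(C) = {α_i² : 1 ≤ i ≤ n2}`. -/
def StarData.SG2 (d : StarData) : Set ℂ := Set.range fun i => d.a i ^ 2

/-- The parameter set `𝒮*_{Γ,2,neg}(C) = {-α_i² : 1 ≤ i ≤ n2}`. -/
def StarData.SG2neg (d : StarData) : Set ℂ := Set.range fun i => -(d.a i ^ 2)

/-- The parameter set `𝒮*_H(C) = {μ_i : 1 ≤ i ≤ n3}`. -/
def StarData.SH (d : StarData) : Set ℂ := Set.range d.mu

/-- The direct sum of two canonical matrices: concatenation of the block data. -/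
def StarData.append (d e : StarData) : StarData :=
  ⟨d.n1 + e.n1, d.n2 + e.n2, d.n3 + e.n3, Fin.append d.k e.k, Fin.append d.l e.l,
    Fin.append d.a e.a, Fin.append d.m e.m, Fin.append d.mu e.mu⟩

/-- The direct sum `C_1 ⊕ ⋯ ⊕ C_q` of a family of canonical matrices: concatenation of
the block data.  -/
def appendAll : {q : ℕ} → (Fin q → StarData) → StarData
  | 0, _ => ⟨0, 0, 0, Fin.elim0, Fin.elim0, Fin.elim0, Fin.elim0, Fin.elim0⟩
  | _ + 1, C => StarData.append (C 0) (appendAll fun i => C i.succ)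


/-! ### Auxiliary lemmas -/

section Aux

variable {m n m' n' p : ℕ}

lemma dsum_ll (A : Matrix (Fin m) (Fin m) ℂ) (B : Matrix (Fin n) (Fin n) ℂ) (i j : Fin m) :
    dsum A B (Fin.castAdd n i) (Fin.castAdd n j) = A i j := by simp [dsum]
lemma dsum_rr (A : Matrix (Fin m) (Fin m) ℂ) (B : Matrix (Fin n) (Fin n) ℂ) (i j : Fin n) :
    dsum A B (Fin.natAdd m i) (Fin.natAdd m j) = B i j := by simp [dsum]
lemma dsum_lr (A : Matrix (Fin m) (Fin m) ℂ) (B : Matrix (Fin n) (Fin n) ℂ) (i : Fin m) (j : Fin n) :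
    dsum A B (Fin.castAdd n i) (Fin.natAdd m j) = 0 := by simp [dsum]
lemma dsum_rl (A : Matrix (Fin m) (Fin m) ℂ) (B : Matrix (Fin n) (Fin n) ℂ) (i : Fin n) (j : Fin m) :
    dsum A B (Fin.natAdd m i) (Fin.castAdd n j) = 0 := by simp [dsum]

lemma dsum_mul (A A' : Matrix (Fin m) (Fin m) ℂ) (B B' : Matrix (Fin n) (Fin n) ℂ) :
    dsum A B * dsum A' B' = dsum (A * A') (B * B') := by
  simp only [dsum, Matrix.reindex_apply, Matrix.submatrix_mul_equiv, Matrix.fromBlocks_multiply]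
  simp

lemma dsum_conjTranspose (A : Matrix (Fin m) (Fin m) ℂ) (B : Matrix (Fin n) (Fin n) ℂ) :
    (dsum A B)ᴴ = dsum Aᴴ Bᴴ := by
  simp only [dsum, Matrix.reindex_apply, ← Matrix.conjTranspose_submatrix]
  simp [Matrix.fromBlocks_conjTranspose]

lemma dsum_one : dsum (1 : Matrix (Fin m) (Fin m) ℂ) (1 : Matrix (Fin n) (Fin n) ℂ) = 1 := by
  simp only [dsum, Matrix.fromBlocks_one]
  simp [Matrix.reindex_apply, Matrix.submatrix_one_equiv]

lemma isUnit_dsum {P : Matrix (Fin m) (Fin m) ℂ} {Q : Matrix (Fin n) (Fin n) ℂ}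
    (hP : IsUnit P) (hQ : IsUnit Q) : IsUnit (dsum P Q) := by
  obtain ⟨u, rfl⟩ := hP
  obtain ⟨v, rfl⟩ := hQ
  exact ⟨⟨dsum u.val v.val, dsum u.inv v.inv,
    by rw [dsum_mul, u.val_inv, v.val_inv, dsum_one],
    by rw [dsum_mul, u.inv_val, v.inv_val, dsum_one]⟩, rfl⟩

lemma reindex_mul (e : Fin m ≃ Fin n) (A B : Matrix (Fin m) (Fin m) ℂ) :
    Matrix.reindex e e A * Matrix.reindex e e B = Matrix.reindex e e (A * B) := by
  simp only [Matrix.reindex_apply]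
  exact Matrix.submatrix_mul_equiv A B _ e.symm _

lemma isUnit_reindex (e : Fin m ≃ Fin n) {P : Matrix (Fin m) (Fin m) ℂ} (hP : IsUnit P) :
    IsUnit (Matrix.reindex e e P) := by
  obtain ⟨u, rfl⟩ := hP
  exact ⟨⟨Matrix.reindex e e u.val, Matrix.reindex e e u.inv,
    by rw [reindex_mul, u.val_inv]; simp [Matrix.reindex_apply, Matrix.submatrix_one_equiv],
    by rw [reindex_mul, u.inv_val]; simp [Matrix.reindex_apply, Matrix.submatrix_one_equiv]⟩, rfl⟩

/-- `A` is obtained from `B` by a simultaneous permutation of rows and columns. -/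
def UC {m m' : ℕ} (A : Matrix (Fin m) (Fin m) ℂ) (B : Matrix (Fin m') (Fin m') ℂ) : Prop :=
  ∃ e : Fin m ≃ Fin m', ∀ i j, A i j = B (e i) (e j)

lemma UC.refl (A : Matrix (Fin m) (Fin m) ℂ) : UC A A := ⟨Equiv.refl _, fun _ _ => rfl⟩

lemma UC.trans {A : Matrix (Fin m) (Fin m) ℂ} {B : Matrix (Fin m') (Fin m') ℂ}
    {C : Matrix (Fin p) (Fin p) ℂ} (h1 : UC A B) (h2 : UC B C) : UC A C := by
  obtain ⟨e, he⟩ := h1; obtain ⟨f, hf⟩ := h2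
  exact ⟨e.trans f, fun i j => (he i j).trans (hf _ _)⟩

lemma UC.symm {A : Matrix (Fin m) (Fin m) ℂ} {B : Matrix (Fin m') (Fin m') ℂ}
    (h : UC A B) : UC B A := by
  obtain ⟨e, he⟩ := h
  refine ⟨e.symm, fun i j => ?_⟩
  rw [he (e.symm i) (e.symm j), e.apply_symm_apply, e.apply_symm_apply]

lemma UC.dsumCongr {A : Matrix (Fin m) (Fin m) ℂ} {B : Matrix (Fin m') (Fin m') ℂ}
    {A' : Matrix (Fin n) (Fin n) ℂ} {B' : Matrix (Fin n') (Fin n') ℂ}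
    (h : UC A B) (h' : UC A' B') : UC (dsum A A') (dsum B B') := by
  obtain ⟨e, he⟩ := h; obtain ⟨f, hf⟩ := h'
  refine ⟨finSumFinEquiv.symm.trans ((e.sumCongr f).trans finSumFinEquiv), fun i j => ?_⟩
  induction i using Fin.addCases with
  | left i =>
    induction j using Fin.addCases with
    | left j => simp [dsum_ll, dsum_lr, dsum_rl, dsum_rr, he, hf]
    | right j => simp [dsum_ll, dsum_lr, dsum_rl, dsum_rr, he, hf]
  | right i =>
    induction j using Fin.addCases with
    | left j => simp [dsum_ll, dsum_lr, dsum_rl, dsum_rr, he, hf]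
    | right j => simp [dsum_ll, dsum_lr, dsum_rl, dsum_rr, he, hf]

lemma UC.comm (A : Matrix (Fin m) (Fin m) ℂ) (B : Matrix (Fin n) (Fin n) ℂ) :
    UC (dsum A B) (dsum B A) := by
  refine ⟨finSumFinEquiv.symm.trans ((Equiv.sumComm _ _).trans finSumFinEquiv), fun i j => ?_⟩
  induction i using Fin.addCases with
  | left i =>
    induction j using Fin.addCases with
    | left j => simp [dsum_ll, dsum_lr, dsum_rl, dsum_rr]
    | right j => simp [dsum_ll, dsum_lr, dsum_rl, dsum_rr]
  | right i =>
    induction j using Fin.addCases with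
    | left j => simp [dsum_ll, dsum_lr, dsum_rl, dsum_rr]
    | right j => simp [dsum_ll, dsum_lr, dsum_rl, dsum_rr]

lemma UC.assoc (A : Matrix (Fin m) (Fin m) ℂ) (B : Matrix (Fin n) (Fin n) ℂ)
    (C : Matrix (Fin p) (Fin p) ℂ) : UC (dsum (dsum A B) C) (dsum A (dsum B C)) := by
  refine ⟨(finSumFinEquiv.symm.trans ((Equiv.sumCongr finSumFinEquiv.symm (Equiv.refl _)).trans
    ((Equiv.sumAssoc _ _ _).trans ((Equiv.sumCongr (Equiv.refl _) finSumFinEquiv).trans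
      finSumFinEquiv)))), fun i j => ?_⟩
  induction i using Fin.addCases with
  | left i =>
    induction i using Fin.addCases with
    | left i =>
      induction j using Fin.addCases with
      | left j =>
        induction j using Fin.addCases with
        | left j => simp [dsum_ll, dsum_lr, dsum_rl, dsum_rr]
        | right j => simp [dsum_ll, dsum_lr, dsum_rl, dsum_rr]
      | right j => simp [dsum_ll, dsum_lr, dsum_rl, dsum_rr]
    | right i =>
      induction j using Fin.addCases with
      | left j =>
        induction j using Fin.addCases with
        | left j => simp [dsum_ll, dsum_lr, dsum_rl, dsum_rr]
        | right j => simp [dsum_ll, dsum_lr, dsum_rl, dsum_rr]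
      | right j => simp [dsum_ll, dsum_lr, dsum_rl, dsum_rr]
  | right i =>
    induction j using Fin.addCases with
    | left j =>
      induction j using Fin.addCases with
      | left j => simp [dsum_ll, dsum_lr, dsum_rl, dsum_rr]
      | right j => simp [dsum_ll, dsum_lr, dsum_rl, dsum_rr]
    | right j => simp [dsum_ll, dsum_lr, dsum_rl, dsum_rr]

lemma UC.exch (A : Matrix (Fin m) (Fin m) ℂ) (B : Matrix (Fin n) (Fin n) ℂ)
    (C : Matrix (Fin m') (Fin m') ℂ) (D : Matrix (Fin n') (Fin n') ℂ) :
    UC (dsum (dsum A C) (dsum B D)) (dsum (dsum A B) (dsum C D)) := by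
  have h1 : UC (dsum (dsum A C) (dsum B D)) (dsum A (dsum C (dsum B D))) := UC.assoc _ _ _
  have h2 : UC (dsum C (dsum B D)) (dsum (dsum C B) D) := (UC.assoc _ _ _).symm
  have h3 : UC (dsum (dsum C B) D) (dsum (dsum B C) D) := (UC.comm C B).dsumCongr (UC.refl _)
  have h4 : UC (dsum (dsum B C) D) (dsum B (dsum C D)) := UC.assoc _ _ _
  have h5 : UC (dsum A (dsum B (dsum C D))) (dsum (dsum A B) (dsum C D)) := (UC.assoc _ _ _).symm
  exact h1.trans ((UC.refl A).dsumCongr ((h2.trans h3).trans h4)) |>.trans h5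

end Aux
-- casting a finDsum along an equality of the number of blocks
lemma UC_finDsum_cast {q q' : ℕ} (h : q = q') (s : Fin q' → ℕ)
    (M : (i : Fin q') → Matrix (Fin (s i)) (Fin (s i)) ℂ) :
    UC (finDsum (fun i => s (Fin.cast h i)) (fun i => M (Fin.cast h i))) (finDsum s M) := by
  subst h
  exact UC.refl _

lemma UC_finDsum_congr {q : ℕ} {s t : Fin q → ℕ} (hst : ∀ i, s i = t i)
    {M : (i : Fin q) → Matrix (Fin (s i)) (Fin (s i)) ℂ}
    {N : (i : Fin q) → Matrix (Fin (t i)) (Fin (t i)) ℂ}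
    (hMN : ∀ i, HEq (M i) (N i)) : UC (finDsum s M) (finDsum t N) := by
  have hs : s = t := funext hst
  subst hs
  have : M = N := funext fun i => eq_of_heq (hMN i)
  subst this
  exact UC.refl _

lemma UC_dsum_zero_left {n : ℕ} (A : Matrix (Fin 0) (Fin 0) ℂ) (B : Matrix (Fin n) (Fin n) ℂ) :
    UC (dsum A B) B := by
  refine ⟨finCongr (Nat.zero_add n), fun i j => ?_⟩
  induction i using Fin.addCases with
  | left i => exact i.elim0
  | right i =>
    induction j using Fin.addCases with
    | left j => exact j.elim0
    | right j =>
      rw [dsum_rr]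
      congr 1 <;> (apply Fin.ext; simp)

section appendHelpers
variable {α : Sort*} {q q' : ℕ}

lemma app_zero (s : Fin (q + 1) → α) (s' : Fin q' → α) :
    Fin.append s s' (Fin.cast (Nat.succ_add q q').symm 0) = s 0 := by
  have : (Fin.cast (Nat.succ_add q q').symm (0 : Fin (q + q' + 1)))
      = Fin.castAdd q' (0 : Fin (q + 1)) := by apply Fin.ext; simp
  rw [this, Fin.append_left]

lemma app_succ (s : Fin (q + 1) → α) (s' : Fin q' → α) (i : Fin (q + q')) :
    Fin.append s s' (Fin.cast (Nat.succ_add q q').symm i.succ)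
      = Fin.append (fun j : Fin q => s j.succ) s' i := by
  induction i using Fin.addCases with
  | left i =>
    have : (Fin.cast (Nat.succ_add q q').symm (Fin.castAdd q' i).succ)
        = Fin.castAdd q' i.succ := by apply Fin.ext; simp
    rw [this, Fin.append_left, Fin.append_left]
  | right i =>
    have : (Fin.cast (Nat.succ_add q q').symm (Fin.natAdd q i).succ)
        = Fin.natAdd (q + 1) i := by apply Fin.ext; simp; omega
    rw [this, Fin.append_right, Fin.append_right]

end appendHelpers

lemma UC_finDsum_append {γ : Sort*} (g : ℕ → ℕ)
    (F : (n : ℕ) → γ → Matrix (Fin (g n)) (Fin (g n)) ℂ) :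
    ∀ {q : ℕ} (s : Fin q → ℕ) (c : Fin q → γ) {q' : ℕ} (s' : Fin q' → ℕ) (c' : Fin q' → γ),
    UC (finDsum (fun i => g (Fin.append s s' i)) (fun i => F (Fin.append s s' i) (Fin.append c c' i)))
       (dsum (finDsum (fun i => g (s i)) (fun i => F (s i) (c i)))
             (finDsum (fun i => g (s' i)) (fun i => F (s' i) (c' i)))) := by
  intro q
  induction q with
  | zero =>
    intro s c q' s' c'
    have h0 : 0 + q' = q' := Nat.zero_add q'
    have keyN : ∀ (u : Fin 0 → ℕ) (v : Fin q' → ℕ) (i : Fin (0 + q')),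
        Fin.append u v i = v (Fin.cast h0 i) := by
      intro u v i
      have hi : i = Fin.natAdd 0 (Fin.cast h0 i) := by apply Fin.ext; simp
      conv_lhs => rw [hi]
      rw [Fin.append_right]
    have keyG : ∀ (u : Fin 0 → γ) (v : Fin q' → γ) (i : Fin (0 + q')),
        Fin.append u v i = v (Fin.cast h0 i) := by
      intro u v i
      have hi : i = Fin.natAdd 0 (Fin.cast h0 i) := by apply Fin.ext; simp
      conv_lhs => rw [hi]
      rw [Fin.append_right]
    have step1 : UC (finDsum (fun i => g (Fin.append s s' i))
        (fun i => F (Fin.append s s' i) (Fin.append c c' i)))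
        (finDsum (fun i : Fin (0 + q') => g (s' (Fin.cast h0 i)))
          (fun i => F (s' (Fin.cast h0 i)) (c' (Fin.cast h0 i)))) := by
      apply UC_finDsum_congr
      · intro i; rw [keyN s s' i]
      · intro i; rw [keyN s s' i, keyG c c' i]
    have step2 := UC_finDsum_cast (h := h0) (fun i => g (s' i))
      (fun i => F (s' i) (c' i))
    refine (step1.trans step2).trans ?_
    exact (UC_dsum_zero_left _ _).symm
  | succ q IH =>
    intro s c q' s' c'
    have h1 : q + q' + 1 = (q + 1) + q' := by omega
    have step1 := UC_finDsum_cast (h := h1) (fun i => g (Fin.append s s' i))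
      (fun i => F (Fin.append s s' i) (Fin.append c c' i))
    have step2 : UC (finDsum (fun i : Fin (q + q' + 1) => g (Fin.append s s' (Fin.cast h1 i)))
          (fun i => F (Fin.append s s' (Fin.cast h1 i)) (Fin.append c c' (Fin.cast h1 i))))
        (dsum (F (s 0) (c 0))
          (finDsum (fun i => g (Fin.append (fun j : Fin q => s j.succ) s' i))
            (fun i => F (Fin.append (fun j : Fin q => s j.succ) s' i)
              (Fin.append (fun j : Fin q => c j.succ) c' i)))) := by
      show UC (dsum (F (Fin.append s s' (Fin.cast h1 0)) (Fin.append c c' (Fin.cast h1 0)))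
        (finDsum (fun i : Fin (q + q') => g (Fin.append s s' (Fin.cast h1 i.succ)))
          (fun i => F (Fin.append s s' (Fin.cast h1 i.succ)) (Fin.append c c' (Fin.cast h1 i.succ))))) _
      apply UC.dsumCongr
      · have e0s : Fin.append s s' (Fin.cast h1 0) = s 0 := app_zero s s'
        have e0c : Fin.append c c' (Fin.cast h1 0) = c 0 := app_zero c c'
        rw [e0s, e0c]
        exact UC.refl _
      · apply UC_finDsum_congr
        · intro i; rw [app_succ]
        · intro i; rw [app_succ s s' i, app_succ c c' i]
    have step3 := IH (fun j => s j.succ) (fun j => c j.succ) s' c'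
    refine (step1.symm.trans (step2.trans ?_))
    refine (UC.dsumCongr (UC.refl (F (s 0) (c 0))) step3).trans ?_
    exact (UC.assoc _ _ _).symm

/-! ### Permutation congruence and the bundle -/

lemma UC_reindex {m m' : ℕ} (h : m = m') (B : Matrix (Fin m) (Fin m) ℂ) :
    UC B (Matrix.reindex (finCongr h) (finCongr h) B) := by
  refine ⟨finCongr h, fun i j => ?_⟩
  simp

lemma UC.exists_perm {m : ℕ} {A X : Matrix (Fin m) (Fin m) ℂ} (h : UC A X) :
    ∃ T : Matrix (Fin m) (Fin m) ℂ, IsUnit T ∧ X = T * A * Tᴴ := by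
  obtain ⟨e, he⟩ := h
  set T : Matrix (Fin m) (Fin m) ℂ := Matrix.of fun i j => if j = e.symm i then 1 else 0 with hT
  have hTA : ∀ (M : Matrix (Fin m) (Fin m) ℂ) (i k), (T * M) i k = M (e.symm i) k := by
    intro M i k
    simp only [Matrix.mul_apply, hT, Matrix.of_apply, ite_mul, one_mul, zero_mul]
    rw [Finset.sum_ite_eq' Finset.univ (e.symm i) (fun j => M j k)]
    simp
  have hTH : ∀ (M : Matrix (Fin m) (Fin m) ℂ) (i k), (M * Tᴴ) i k = M i (e.symm k) := by
    intro M i k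
    simp only [Matrix.mul_apply, hT, Matrix.conjTranspose_apply, Matrix.of_apply]
    have : ∀ j, M i j * star (if j = e.symm k then (1 : ℂ) else 0)
        = if j = e.symm k then M i j else 0 := by
      intro j; split <;> simp
    simp only [this]
    rw [Finset.sum_ite_eq' Finset.univ (e.symm k) (fun j => M i j)]
    simp
  have hTT : T * Tᴴ = 1 := by
    ext i j
    rw [hTH T i j, hT]
    simp only [Matrix.of_apply, Matrix.one_apply]
    by_cases hij : i = j
    · simp [hij]
    · have : ¬ (e.symm j = e.symm i) := fun hc => hij (e.symm.injective hc).symm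
      simp [hij, this]
  have hT2 : ∀ k i, T k i = if k = e i then 1 else 0 := by
    intro k i
    rw [hT]
    simp only [Matrix.of_apply]
    by_cases h : k = e i
    · subst h; simp
    · have : ¬ (i = e.symm k) := fun hc => h (by rw [hc]; simp)
      simp [h, this]
  have hTT' : Tᴴ * T = 1 := by
    ext i j
    simp only [Matrix.mul_apply, Matrix.conjTranspose_apply]
    have hki : ∀ k, star (T k i) * T k j = if k = e i then T k j else 0 := by
      intro k
      rw [hT2 k i]
      split <;> simp
    simp only [hki]
    rw [Finset.sum_ite_eq' Finset.univ (e i) (fun k => T k j)]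
    simp [hT2, Matrix.one_apply, Equiv.apply_eq_iff_eq]
  refine ⟨T, ⟨⟨T, Tᴴ, hTT, hTT'⟩, rfl⟩, ?_⟩
  · ext i j
    rw [hTH (T * A) i j, hTA A i (e.symm j)]
    rw [he (e.symm i) (e.symm j)]
    simp

lemma mem_starBundle_of_UC (f : StarData) {a : Fin f.n2 → ℂ} {mu : Fin f.n3 → ℂ}
    (hok : f.ParamsOK a mu) {P X : Matrix (Fin f.size) (Fin f.size) ℂ}
    (hP : IsUnit P) (h : UC (f.matWith a mu) X) :
    P * X * Pᴴ ∈ starBundle f := by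
  obtain ⟨T, hTu, rfl⟩ := h.exists_perm
  refine ⟨a, mu, P * T, hP.mul hTu, hok, ?_⟩
  rw [Matrix.conjTranspose_mul]
  noncomm_ring

lemma UC_matWith_append (d e : StarData) (a : Fin d.n2 → ℂ) (a' : Fin e.n2 → ℂ)
    (mu : Fin d.n3 → ℂ) (mu' : Fin e.n3 → ℂ) :
    UC ((d.append e).matWith (Fin.append a a') (Fin.append mu mu'))
      (dsum (d.matWith a mu) (e.matWith a' mu')) := by
  have hJ := UC_finDsum_append (γ := Unit) (fun n => n) (fun n _ => Jblock n 0)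
    d.k (fun _ => ()) e.k (fun _ => ())
  have hG := UC_finDsum_append (γ := ℂ) (fun n => n) (fun n α => α • Gamma n)
    d.l a e.l a'
  have hH := UC_finDsum_append (γ := ℂ) (fun n => n + n) (fun n μ => Hblock n μ)
    d.m mu e.m mu'
  have first : UC ((d.append e).matWith (Fin.append a a') (Fin.append mu mu'))
      (dsum (dsum (finDsum d.k fun i => Jblock (d.k i) 0)
                  (finDsum e.k fun i => Jblock (e.k i) 0))
            (dsum (dsum (finDsum d.l fun i => a i • Gamma (d.l i))
                        (finDsum e.l fun i => a' i • Gamma (e.l i)))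
                  (dsum (finDsum (fun i => d.m i + d.m i) fun i => Hblock (d.m i) (mu i))
                        (finDsum (fun i => e.m i + e.m i) fun i => Hblock (e.m i) (mu' i))))) :=
    hJ.dsumCongr (hG.dsumCongr hH)
  refine first.trans ?_
  refine ((UC.refl _).dsumCongr (UC.exch _ _ _ _)).trans (UC.exch _ _ _ _)

/-! ### Continuity -/

section Cont

variable {X : Type*} [TopologicalSpace X]

lemma continuous_dsum {m n : ℕ} {A : X → Matrix (Fin m) (Fin m) ℂ}
    {B : X → Matrix (Fin n) (Fin n) ℂ} (hA : Continuous A) (hB : Continuous B) :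
    Continuous fun x => dsum (A x) (B x) := by
  apply continuous_matrix
  intro i j
  induction i using Fin.addCases with
  | left i =>
    induction j using Fin.addCases with
    | left j => simp only [dsum_ll]; exact hA.matrix_elem _ _
    | right j => simp only [dsum_lr]; exact continuous_const
  | right i =>
    induction j using Fin.addCases with
    | left j => simp only [dsum_rl]; exact continuous_const
    | right j => simp only [dsum_rr]; exact hB.matrix_elem _ _

lemma continuous_finDsum : ∀ {q : ℕ} (s : Fin q → ℕ)
    (M : X → (i : Fin q) → Matrix (Fin (s i)) (Fin (s i)) ℂ)
    (_ : ∀ i, Continuous fun x => M x i),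
    Continuous fun x => finDsum s (M x)
  | 0, _, _, _ => continuous_const
  | q + 1, s, M, hM =>
    continuous_dsum (hM 0) (continuous_finDsum (fun i => s i.succ)
      (fun x i => M x i.succ) (fun i => hM i.succ))

lemma continuous_Hblock (k : ℕ) : Continuous fun μ : ℂ => Hblock k μ := by
  apply continuous_matrix
  intro i j
  simp only [Hblock, Matrix.reindex_apply, Matrix.submatrix_apply]
  rcases hi : finSumFinEquiv.symm i with i0 | i0 <;>
    rcases hj : finSumFinEquiv.symm j with j0 | j0 <;>
      simp only [Matrix.fromBlocks_apply₁₁, Matrix.fromBlocks_apply₁₂,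
        Matrix.fromBlocks_apply₂₁, Matrix.fromBlocks_apply₂₂]
  · exact continuous_const
  · exact continuous_const
  · simp only [Jblock, Matrix.of_apply]
    split
    · exact continuous_id
    · exact continuous_const
  · exact continuous_const

lemma continuous_matWith (d : StarData) :
    Continuous fun p : (Fin d.n2 → ℂ) × (Fin d.n3 → ℂ) => d.matWith p.1 p.2 := by
  apply continuous_dsum continuous_const
  apply continuous_dsum
  · apply continuous_finDsum
    intro i
    exact ((continuous_apply i).comp continuous_fst).smul continuous_const
  · apply continuous_finDsum
    intro i
    exact (continuous_Hblock (d.m i)).comp ((continuous_apply i).comp continuous_snd)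

end Cont

/-! ### The bad set of perturbation parameters -/

open Complex in
lemma expsq_injOn : Set.InjOn (fun θ : ℝ => Complex.exp (θ * Complex.I) ^ 2) (Set.Ioo 0 1) := by
  intro x hx y hy hxy
  simp only [sq, ← Complex.exp_add] at hxy
  obtain ⟨n, hn⟩ := Complex.exp_eq_exp_iff_exists_int.mp hxy
  have him := congrArg Complex.im hn
  simp only [Complex.add_im, Complex.mul_im, Complex.ofReal_re, Complex.ofReal_im,
    Complex.I_im, Complex.I_re, Complex.intCast_re, Complex.intCast_im, Complex.mul_re,
    Complex.re_ofNat, Complex.im_ofNat] at him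
  have hπ := Real.pi_gt_three
  have hx0 := hx.1; have hx1 := hx.2; have hy0 := hy.1; have hy1 := hy.2
  have hn0 : n = 0 := by
    by_contra hne
    rcases lt_or_gt_of_ne hne with hlt | hgt
    · have : (n : ℝ) ≤ -1 := by exact_mod_cast (by omega : n ≤ -1)
      nlinarith
    · have : (1 : ℝ) ≤ (n : ℝ) := by exact_mod_cast (by omega : 1 ≤ n)
      nlinarith
  subst hn0
  simp at him
  linarith

/-- The set of "bad" perturbation parameters. -/
def badSet {n2 n2' n3 n3' : ℕ} (a : Fin n2 → ℂ) (a' : Fin n2' → ℂ)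
    (mu : Fin n3 → ℂ) (mu' : Fin n3' → ℂ) : Set ℝ :=
  {θ | (∃ (i : Fin n2) (j : Fin n2'),
        Complex.exp (θ * Complex.I) ^ 2 = a i ^ 2 / a' j ^ 2 ∨
        Complex.exp (θ * Complex.I) ^ 2 = -(a i ^ 2) / a' j ^ 2) ∨
      ∃ (i : Fin n3) (j : Fin n3'), ((1 + θ : ℝ) : ℂ) = mu i / mu' j}

lemma finite_badSet {n2 n2' n3 n3' : ℕ} (a : Fin n2 → ℂ) (a' : Fin n2' → ℂ)
    (mu : Fin n3 → ℂ) (mu' : Fin n3' → ℂ) :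
    (Set.Ioo (0:ℝ) 1 ∩ badSet a a' mu mu').Finite := by
  have fin1 : ∀ w : ℂ, (Set.Ioo (0:ℝ) 1 ∩ {θ : ℝ | Complex.exp (θ * Complex.I) ^ 2 = w}).Finite := by
    intro w
    apply Set.Subsingleton.finite
    intro x hx y hy
    exact expsq_injOn hx.1 hy.1 (hx.2.trans hy.2.symm)
  have fin2 : ∀ w : ℂ, ({θ : ℝ | ((1 + θ : ℝ) : ℂ) = w}).Finite := by
    intro w
    apply Set.Subsingleton.finite
    intro x hx y hy
    have : ((1 + x : ℝ) : ℂ) = ((1 + y : ℝ) : ℂ) := hx.trans hy.symm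
    have := Complex.ofReal_injective this
    linarith
  apply Set.Finite.subset
    (((Set.finite_iUnion fun i : Fin n2 => Set.finite_iUnion fun j : Fin n2' =>
        (fin1 (a i ^ 2 / a' j ^ 2)).union (fin1 (-(a i ^ 2) / a' j ^ 2))).union
      (Set.finite_iUnion fun i : Fin n3 => Set.finite_iUnion fun j : Fin n3' =>
        fin2 (mu i / mu' j))))
  rintro θ ⟨hθI, hθB⟩
  rcases hθB with ⟨i, j, hij⟩ | ⟨i, j, hij⟩
  · refine Set.mem_union_left _ (Set.mem_iUnion.mpr ⟨i, Set.mem_iUnion.mpr ⟨j, ?_⟩⟩)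
    rcases hij with h | h
    · exact Set.mem_union_left _ ⟨hθI, h⟩
    · exact Set.mem_union_right _ ⟨hθI, h⟩
  · exact Set.mem_union_right _ (Set.mem_iUnion.mpr ⟨i, Set.mem_iUnion.mpr ⟨j, hij⟩⟩)

/-! ### ParamsOK for perturbed parameters -/

lemma paramsOK_perturbed (d e : StarData)
    (h1 : d.SG2 ∩ e.SG2 = ∅) (h2 : d.SG2 ∩ e.SG2neg = ∅)
    (h2' : e.SG2 ∩ d.SG2neg = ∅) (h3 : d.SH ∩ e.SH = ∅)
    {a : Fin d.n2 → ℂ} {mu : Fin d.n3 → ℂ} {a' : Fin e.n2 → ℂ} {mu' : Fin e.n3 → ℂ}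
    (hokd : d.ParamsOK a mu) (hoke : e.ParamsOK a' mu')
    {θ : ℝ} (hθ : 0 < θ) (hbad : θ ∉ badSet a a' mu mu') :
    (d.append e).ParamsOK
      (Fin.append a fun j => Complex.exp (θ * Complex.I) * a' j)
      (Fin.append mu fun j => ((1 + θ : ℝ) : ℂ) * mu' j) := by
  obtain ⟨hd1, hd2, hd3, hd4, hd5⟩ := hokd
  obtain ⟨he1, he2, he3, he4, he5⟩ := hoke
  have hω : Complex.exp (θ * Complex.I) ≠ 0 := Complex.exp_ne_zero _
  have hω2 : Complex.exp (θ * Complex.I) ^ 2 ≠ 0 := pow_ne_zero _ hω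
  have ha'0 : ∀ j, a' j ≠ 0 := by
    intro j hc
    have := he1 j
    rw [hc] at this
    simp at this
  have ha'20 : ∀ j, a' j ^ 2 ≠ 0 := fun j => pow_ne_zero _ (ha'0 j)
  have hmu'0 : ∀ j, mu' j ≠ 0 := by
    intro j hc
    have := he2 j
    rw [hc] at this
    simp only [norm_zero] at this
    linarith
  have h1θ : ((1 + θ : ℝ) : ℂ) ≠ 0 := Complex.ofReal_ne_zero.mpr (by linarith)
  -- consequences of the disjointness hypotheses
  have hds1 : ∀ (i : Fin d.n2) (j : Fin e.n2), d.a i ^ 2 ≠ e.a j ^ 2 := by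
    intro i j hc
    exact Set.eq_empty_iff_forall_notMem.mp h1 (d.a i ^ 2) ⟨⟨i, rfl⟩, ⟨j, hc.symm⟩⟩
  have hds2 : ∀ (i : Fin d.n2) (j : Fin e.n2), d.a i ^ 2 ≠ -(e.a j ^ 2) := by
    intro i j hc
    exact Set.eq_empty_iff_forall_notMem.mp h2 (d.a i ^ 2) ⟨⟨i, rfl⟩, ⟨j, hc.symm⟩⟩
  have hds2' : ∀ (i : Fin e.n2) (j : Fin d.n2), e.a i ^ 2 ≠ -(d.a j ^ 2) := by
    intro i j hc
    exact Set.eq_empty_iff_forall_notMem.mp h2' (e.a i ^ 2) ⟨⟨i, rfl⟩, ⟨j, hc.symm⟩⟩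
  have hds3 : ∀ (i : Fin d.n3) (j : Fin e.n3), d.mu i ≠ e.mu j := by
    intro i j hc
    exact Set.eq_empty_iff_forall_notMem.mp h3 (d.mu i) ⟨⟨i, rfl⟩, ⟨j, hc.symm⟩⟩
  -- consequences of θ ∉ badSet
  have hb1 : ∀ (i : Fin d.n2) (j : Fin e.n2),
      a i ^ 2 ≠ (Complex.exp (θ * Complex.I) * a' j) ^ 2 := by
    intro i j hc
    exact hbad (Or.inl ⟨i, j, Or.inl (by rw [mul_pow] at hc; rw [eq_div_iff (ha'20 j)]; linear_combination -hc)⟩)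
  have hb2 : ∀ (i : Fin d.n2) (j : Fin e.n2),
      a i ^ 2 ≠ -((Complex.exp (θ * Complex.I) * a' j) ^ 2) := by
    intro i j hc
    exact hbad (Or.inl ⟨i, j, Or.inr (by rw [mul_pow] at hc; rw [eq_div_iff (ha'20 j)]; linear_combination hc)⟩)
  have hb3 : ∀ (i : Fin d.n3) (j : Fin e.n3),
      mu i ≠ ((1 + θ : ℝ) : ℂ) * mu' j := by
    intro i j hc
    exact hbad (Or.inr ⟨i, j, by rw [eq_div_iff (hmu'0 j)]; linear_combination -hc⟩)
  refine ⟨?_, ?_, ?_, ?_, ?_⟩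
  · intro i
    induction i using Fin.addCases with
    | left i => simpa using hd1 i
    | right i =>
      simp only [Fin.append_right, norm_mul, Complex.norm_exp_ofReal_mul_I, he1 i, one_mul]
  · intro i
    induction i using Fin.addCases with
    | left i => simpa using hd2 i
    | right i =>
      simp only [Fin.append_right, norm_mul, Complex.norm_real, Real.norm_eq_abs]
      have := he2 i
      rw [abs_of_pos (by linarith : (0:ℝ) < 1 + θ)]
      nlinarith
  · intro i j hpar
    induction i using Fin.addCases with
    | left i =>
      induction j using Fin.addCases with
      | left j =>
        simp only [StarData.append, Fin.append_left] at hpar ⊢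
        exact hd3 i j hpar
      | right j =>
        simp only [StarData.append, Fin.append_left, Fin.append_right] at hpar ⊢
        exact iff_of_true (hb1 i j) (hds1 i j)
    | right i =>
      induction j using Fin.addCases with
      | left j =>
        simp only [StarData.append, Fin.append_left, Fin.append_right] at hpar ⊢
        refine iff_of_true (fun hc => hb1 j i hc.symm) (fun hc => hds1 j i hc.symm)
      | right j =>
        simp only [StarData.append, Fin.append_right] at hpar ⊢
        rw [mul_pow, mul_pow]
        exact (not_congr (mul_right_inj' hω2)).trans (he3 i j hpar)
  · intro i j hpar
    induction i using Fin.addCases with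
    | left i =>
      induction j using Fin.addCases with
      | left j =>
        simp only [StarData.append, Fin.append_left] at hpar ⊢
        exact hd4 i j hpar
      | right j =>
        simp only [StarData.append, Fin.append_left, Fin.append_right] at hpar ⊢
        exact iff_of_true (hb2 i j) (hds2 i j)
    | right i =>
      induction j using Fin.addCases with
      | left j =>
        simp only [StarData.append, Fin.append_left, Fin.append_right] at hpar ⊢
        refine iff_of_true ?_ ?_
        · intro hc
          exact hb2 j i (by linear_combination hc)
        · intro hc
          exact hds2' i j hc
      | right j =>
        simp only [StarData.append, Fin.append_right] at hpar ⊢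
        rw [mul_pow, mul_pow, ← mul_neg]
        exact (not_congr (mul_right_inj' hω2)).trans (he4 i j hpar)
  · intro i j
    induction i using Fin.addCases with
    | left i =>
      induction j using Fin.addCases with
      | left j =>
        simp only [StarData.append, Fin.append_left]
        exact hd5 i j
      | right j =>
        simp only [StarData.append, Fin.append_left, Fin.append_right]
        exact iff_of_true (hb3 i j) (hds3 i j)
    | right i =>
      induction j using Fin.addCases with
      | left j =>
        simp only [StarData.append, Fin.append_left, Fin.append_right]
        refine iff_of_true (fun hc => hb3 j i hc.symm) (fun hc => hds3 j i hc.symm)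
      | right j =>
        simp only [StarData.append, Fin.append_right]
        exact (not_congr (mul_right_inj' h1θ)).trans (he5 i j)

/-! ### Sizes of appended data -/

lemma finSize_eq_sum : ∀ {q : ℕ} (s : Fin q → ℕ), finSize s = ∑ i, s i
  | 0, s => by simp [finSize]
  | q + 1, s => by
    show s 0 + finSize (fun i => s i.succ) = _
    rw [finSize_eq_sum (fun i => s i.succ), Fin.sum_univ_succ]

lemma finSize_append {q q' : ℕ} (s : Fin q → ℕ) (s' : Fin q' → ℕ) :
    finSize (Fin.append s s') = finSize s + finSize s' := by
  simp only [finSize_eq_sum]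
  rw [Fin.sum_univ_add]
  simp [Fin.append_left, Fin.append_right]

lemma size_append (d e : StarData) : (d.append e).size = d.size + e.size := by
  have hm : (fun i => (d.append e).m i + (d.append e).m i)
      = Fin.append (fun i => d.m i + d.m i) (fun i => e.m i + e.m i) := by
    funext i
    induction i using Fin.addCases with
    | left i => simp [StarData.append, Fin.append_left]
    | right i => simp [StarData.append, Fin.append_right]
  show finSize (Fin.append d.k e.k) + (finSize (Fin.append d.l e.l)
      + finSize (fun i => (d.append e).m i + (d.append e).m i)) = _
  rw [finSize_append, finSize_append]
  rw [show finSize (fun i => (d.append e).m i + (d.append e).m i) = _ from (congrArg finSize hm).trans (finSize_append _ _)]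
  show _ = finSize d.k + (finSize d.l + finSize fun i => d.m i + d.m i)
    + (finSize e.k + (finSize e.l + finSize fun i => e.m i + e.m i))
  ring

/-! ### The two-summand case -/
set_option maxHeartbeats 1600000

section Cont2
variable {X : Type*} [TopologicalSpace X]

lemma continuous_reindex {m n : ℕ} (e1 : Fin m ≃ Fin n) {f : X → Matrix (Fin m) (Fin m) ℂ}
    (hf : Continuous f) : Continuous fun x => Matrix.reindex e1 e1 (f x) := by
  apply continuous_matrix
  intro i j
  simp only [Matrix.reindex_apply, Matrix.submatrix_apply]
  exact hf.matrix_elem _ _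

end Cont2

set_option maxHeartbeats 1000000 in
lemma dsum_mem_closure_two_exact (d e : StarData)
    (h1 : d.SG2 ∩ e.SG2 = ∅) (h2 : d.SG2 ∩ e.SG2neg = ∅)
    (h2' : e.SG2 ∩ d.SG2neg = ∅) (h3 : d.SH ∩ e.SH = ∅)
    {A : Matrix (Fin d.size) (Fin d.size) ℂ} {B : Matrix (Fin e.size) (Fin e.size) ℂ}
    (hA : A ∈ starBundle d) (hB : B ∈ starBundle e) :
    Matrix.reindex (finCongr (size_append d e).symm) (finCongr (size_append d e).symm)
      (dsum A B) ∈ closure (starBundle (d.append e)) := by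
  obtain ⟨a, mu, P, hP, hokd, rfl⟩ := hA
  obtain ⟨a', mu', Q, hQ, hoke, rfl⟩ := hB
  set G : ℝ → Matrix (Fin (d.append e).size) (Fin (d.append e).size) ℂ := fun θ =>
    Matrix.reindex (finCongr (size_append d e).symm) (finCongr (size_append d e).symm)
      (dsum (P * d.matWith a mu * Pᴴ)
        (Q * e.matWith (fun j => Complex.exp (θ * Complex.I) * a' j)
            (fun j => ((1 + θ : ℝ) : ℂ) * mu' j) * Qᴴ)) with hGdef
  have hGc : Continuous G := by
    apply continuous_reindex
    apply continuous_dsum continuous_const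
    have hpar : Continuous fun θ : ℝ =>
        ((fun j => Complex.exp (θ * Complex.I) * a' j : Fin e.n2 → ℂ),
         (fun j => ((1 + θ : ℝ) : ℂ) * mu' j : Fin e.n3 → ℂ)) := by
      apply Continuous.prodMk
      · exact continuous_pi fun j =>
          (Complex.continuous_exp.comp (Complex.continuous_ofReal.mul continuous_const)).mul
            continuous_const
      · exact continuous_pi fun j =>
          ((Complex.continuous_ofReal.comp (continuous_const.add continuous_id)).mul
            continuous_const)
    exact (continuous_const.matrix_mul
      ((continuous_matWith e).comp hpar)).matrix_mul continuous_const
  have ha0 : (fun j : Fin e.n2 => Complex.exp (((0:ℝ):ℂ) * Complex.I) * a' j) = a' := by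
    funext j; norm_num
  have hmu0 : (fun j : Fin e.n3 => (((1 + (0:ℝ)) : ℝ) : ℂ) * mu' j) = mu' := by
    funext j; norm_num
  have hG0 : G 0 = Matrix.reindex (finCongr (size_append d e).symm)
      (finCongr (size_append d e).symm)
      (dsum (P * d.matWith a mu * Pᴴ) (Q * e.matWith a' mu' * Qᴴ)) := by
    simp only [hGdef]
    rw [ha0, hmu0]
  have hmem : ∀ θ : ℝ, 0 < θ → θ ∉ badSet a a' mu mu' →
      G θ ∈ starBundle (d.append e) := by
    intro θ hθ hbad
    have key : G θ
        = (Matrix.reindex (finCongr (size_append d e).symm) (finCongr (size_append d e).symm)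
            (dsum P Q))
          * (Matrix.reindex (finCongr (size_append d e).symm) (finCongr (size_append d e).symm)
            (dsum (d.matWith a mu)
              (e.matWith (fun j => Complex.exp (θ * Complex.I) * a' j)
                (fun j => ((1 + θ : ℝ) : ℂ) * mu' j))))
          * (Matrix.reindex (finCongr (size_append d e).symm) (finCongr (size_append d e).symm)
            (dsum P Q))ᴴ := by
      simp only [hGdef]
      rw [Matrix.conjTranspose_reindex, reindex_mul, reindex_mul]
      congr 1
      rw [dsum_conjTranspose, dsum_mul, dsum_mul]
    rw [key]
    apply mem_starBundle_of_UC (d.append e)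
      (paramsOK_perturbed d e h1 h2 h2' h3 hokd hoke hθ hbad)
      (isUnit_reindex _ (isUnit_dsum hP hQ))
    exact (UC_matWith_append d e a _ mu _).trans (UC_reindex (size_append d e).symm _)
  have hsel : ∀ n : ℕ, ∃ θ : ℝ,
      (θ ∈ Set.Ioo (0:ℝ) (min (1/(n+1:ℝ)) 1)) ∧ θ ∉ badSet a a' mu mu' := by
    intro n
    have hpos : (0:ℝ) < min (1/(n+1:ℝ)) 1 := by positivity
    have hfin := finite_badSet a a' mu mu'
    have hinf := Set.Ioo_infinite hpos
    have hdi : (Set.Ioo (0:ℝ) (min (1/(n+1:ℝ)) 1)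
        \ (Set.Ioo (0:ℝ) 1 ∩ badSet a a' mu mu')).Infinite := hinf.diff hfin
    obtain ⟨θ, hθ1, hθ2⟩ := hdi.nonempty
    refine ⟨θ, hθ1, fun hb => hθ2 ⟨⟨hθ1.1, lt_of_lt_of_le hθ1.2 (min_le_right _ _)⟩, hb⟩⟩
  choose u hu1 hu2 using hsel
  have hu0 : Filter.Tendsto u Filter.atTop (nhds 0) := by
    apply tendsto_of_tendsto_of_tendsto_of_le_of_le tendsto_const_nhds
      tendsto_one_div_add_atTop_nhds_zero_nat
    · exact fun n => le_of_lt (hu1 n).1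
    · exact fun n => le_of_lt (lt_of_lt_of_le (hu1 n).2 (min_le_left _ _))
  have htend : Filter.Tendsto (fun n => G (u n)) Filter.atTop (nhds (G 0)) :=
    (hGc.tendsto 0).comp hu0
  rw [← hG0]
  exact mem_closure_of_tendsto htend
    (Filter.Eventually.of_forall fun n => hmem (u n) (hu1 n).1 (hu2 n))

lemma dsum_mem_closure_two (d e : StarData)
    (h1 : d.SG2 ∩ e.SG2 = ∅) (h2 : d.SG2 ∩ e.SG2neg = ∅)
    (h2' : e.SG2 ∩ d.SG2neg = ∅) (h3 : d.SH ∩ e.SH = ∅)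
    {A : Matrix (Fin d.size) (Fin d.size) ℂ} {B : Matrix (Fin e.size) (Fin e.size) ℂ}
    (hA : A ∈ closure (starBundle d)) (hB : B ∈ closure (starBundle e)) :
    Matrix.reindex (finCongr (size_append d e).symm) (finCongr (size_append d e).symm)
      (dsum A B) ∈ closure (starBundle (d.append e)) := by
  set f : Matrix (Fin d.size) (Fin d.size) ℂ × Matrix (Fin e.size) (Fin e.size) ℂ
      → Matrix (Fin (d.append e).size) (Fin (d.append e).size) ℂ := fun p =>
    Matrix.reindex (finCongr (size_append d e).symm) (finCongr (size_append d e).symm)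
      (dsum p.1 p.2) with hfdef
  have hfc : Continuous f :=
    continuous_reindex _ (continuous_dsum continuous_fst continuous_snd)
  have hmem : (A, B) ∈ closure (starBundle d ×ˢ starBundle e) := by
    rw [closure_prod_eq]
    exact ⟨hA, hB⟩
  have himg : f (A, B) ∈ closure (f '' (starBundle d ×ˢ starBundle e)) :=
    (image_closure_subset_closure_image hfc) (Set.mem_image_of_mem f hmem)
  have hsub : f '' (starBundle d ×ˢ starBundle e) ⊆ closure (starBundle (d.append e)) := by
    rintro _ ⟨⟨A', B'⟩, ⟨hA', hB'⟩, rfl⟩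
    exact dsum_mem_closure_two_exact d e h1 h2 h2' h3 hA' hB'
  have := (closure_mono hsub) himg
  rwa [closure_closure] at this

/-! ### Parameter sets of appended data -/

lemma SG2_append (d e : StarData) : (d.append e).SG2 = d.SG2 ∪ e.SG2 := by
  ext x
  simp only [StarData.SG2, StarData.append, Set.mem_range, Set.mem_union]
  constructor
  · rintro ⟨i, rfl⟩
    induction i using Fin.addCases with
    | left i => exact Or.inl ⟨i, by rw [Fin.append_left]⟩
    | right i => exact Or.inr ⟨i, by rw [Fin.append_right]⟩
  · rintro (⟨i, rfl⟩ | ⟨i, rfl⟩)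
    · exact ⟨Fin.castAdd _ i, by rw [Fin.append_left]⟩
    · exact ⟨Fin.natAdd _ i, by rw [Fin.append_right]⟩

lemma SG2neg_append (d e : StarData) : (d.append e).SG2neg = d.SG2neg ∪ e.SG2neg := by
  ext x
  simp only [StarData.SG2neg, StarData.append, Set.mem_range, Set.mem_union]
  constructor
  · rintro ⟨i, rfl⟩
    induction i using Fin.addCases with
    | left i => exact Or.inl ⟨i, by rw [Fin.append_left]⟩
    | right i => exact Or.inr ⟨i, by rw [Fin.append_right]⟩
  · rintro (⟨i, rfl⟩ | ⟨i, rfl⟩)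
    · exact ⟨Fin.castAdd _ i, by rw [Fin.append_left]⟩
    · exact ⟨Fin.natAdd _ i, by rw [Fin.append_right]⟩

lemma SH_append (d e : StarData) : (d.append e).SH = d.SH ∪ e.SH := by
  ext x
  simp only [StarData.SH, StarData.append, Set.mem_range, Set.mem_union]
  constructor
  · rintro ⟨i, rfl⟩
    induction i using Fin.addCases with
    | left i => exact Or.inl ⟨i, by rw [Fin.append_left]⟩
    | right i => exact Or.inr ⟨i, by rw [Fin.append_right]⟩
  · rintro (⟨i, rfl⟩ | ⟨i, rfl⟩)
    · exact ⟨Fin.castAdd _ i, by rw [Fin.append_left]⟩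
    · exact ⟨Fin.natAdd _ i, by rw [Fin.append_right]⟩

lemma SG2_appendAll : ∀ {q : ℕ} (C : Fin q → StarData),
    (appendAll C).SG2 = ⋃ i, (C i).SG2
  | 0, C => by
    simp [StarData.SG2, appendAll]
  | q + 1, C => by
    show ((C 0).append (appendAll fun i => C i.succ)).SG2 = _
    rw [SG2_append, SG2_appendAll fun i => C i.succ]
    ext x
    simp only [Set.mem_union, Set.mem_iUnion, Fin.exists_fin_succ]

lemma SG2neg_appendAll : ∀ {q : ℕ} (C : Fin q → StarData),
    (appendAll C).SG2neg = ⋃ i, (C i).SG2neg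
  | 0, C => by
    simp [StarData.SG2neg, appendAll]
  | q + 1, C => by
    show ((C 0).append (appendAll fun i => C i.succ)).SG2neg = _
    rw [SG2neg_append, SG2neg_appendAll fun i => C i.succ]
    ext x
    simp only [Set.mem_union, Set.mem_iUnion, Fin.exists_fin_succ]

lemma SH_appendAll : ∀ {q : ℕ} (C : Fin q → StarData),
    (appendAll C).SH = ⋃ i, (C i).SH
  | 0, C => by
    simp [StarData.SH, appendAll]
  | q + 1, C => by
    show ((C 0).append (appendAll fun i => C i.succ)).SH = _
    rw [SH_append, SH_appendAll fun i => C i.succ]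
    ext x
    simp only [Set.mem_union, Set.mem_iUnion, Fin.exists_fin_succ]

lemma sizes_appendAll : ∀ {q : ℕ} (C : Fin q → StarData),
    finSize (fun i => (C i).size) = (appendAll C).size
  | 0, C => rfl
  | q + 1, C => by
    show (C 0).size + finSize (fun i => (C i.succ).size)
      = ((C 0).append (appendAll fun i => C i.succ)).size
    rw [size_append, sizes_appendAll fun i => C i.succ]

lemma reindex_dsum_reindex {m n n' t : ℕ} (h : n = n') (h2 : m + n' = t) (hs : m + n = t)
    (A : Matrix (Fin m) (Fin m) ℂ) (X : Matrix (Fin n) (Fin n) ℂ) :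
    Matrix.reindex (finCongr h2) (finCongr h2)
        (dsum A (Matrix.reindex (finCongr h) (finCongr h) X))
      = Matrix.reindex (finCongr hs) (finCongr hs) (dsum A X) := by
  subst h
  rfl

/-- **Lemma 3.5.**  If `A_i` belongs to the closure of `ℬ*(C_i)` and the parameter sets
of the `C_i` satisfy the disjointness conditions, then `A_1 ⊕ ⋯ ⊕ A_q` belongs to the
closure of `ℬ*(C_1 ⊕ ⋯ ⊕ C_q)`. -/
theorem dsum_mem_closure_starBundle_of_mem_closure (q : ℕ) (C : Fin q → StarData)
    (hC : ∀ i, (C i).Valid)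
    (A : (i : Fin q) → Matrix (Fin (C i).size) (Fin (C i).size) ℂ)
    (hA : ∀ i, A i ∈ closure (starBundle (C i)))
    (hdisj1 : ∀ i j, i ≠ j → (C i).SG2 ∩ (C j).SG2 = ∅)
    (hdisj2 : ∀ i j, i ≠ j → (C i).SG2 ∩ (C j).SG2neg = ∅)
    (hdisj3 : ∀ i j, i ≠ j → (C i).SH ∩ (C j).SH = ∅) :
    ∃ hsz : finSize (fun i => (C i).size) = (appendAll C).size,
      Matrix.reindex (finCongr hsz) (finCongr hsz) (finDsum (fun i => (C i).size) A) ∈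
        closure (starBundle (appendAll C)) := by
  induction q with
  | zero =>
    refine ⟨rfl, subset_closure ?_⟩
    refine ⟨Fin.elim0, Fin.elim0, 1, isUnit_one,
      ⟨fun i => i.elim0, fun i => i.elim0, fun i => i.elim0, fun i => i.elim0,
        fun i => i.elim0⟩, ?_⟩
    apply Matrix.ext
    intro i j
    exact i.elim0
  | succ q IH =>
    set D : Fin q → StarData := fun i => C i.succ with hD
    obtain ⟨h1, hm1⟩ := IH D (fun i => hC i.succ) (fun i => A i.succ) (fun i => hA i.succ)
      (fun i j hij => hdisj1 i.succ j.succ (fun hc => hij (Fin.succ_injective _ hc)))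
      (fun i j hij => hdisj2 i.succ j.succ (fun hc => hij (Fin.succ_injective _ hc)))
      (fun i j hij => hdisj3 i.succ j.succ (fun hc => hij (Fin.succ_injective _ hc)))
    have hh1 : (C 0).SG2 ∩ (appendAll D).SG2 = ∅ := by
      rw [SG2_appendAll D]
      rw [Set.eq_empty_iff_forall_notMem]
      rintro x ⟨hx0, hxU⟩
      obtain ⟨i, hxi⟩ := Set.mem_iUnion.mp hxU
      exact Set.eq_empty_iff_forall_notMem.mp
        (hdisj1 0 i.succ (Fin.succ_ne_zero i).symm) x ⟨hx0, hxi⟩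
    have hh2 : (C 0).SG2 ∩ (appendAll D).SG2neg = ∅ := by
      rw [SG2neg_appendAll D]
      rw [Set.eq_empty_iff_forall_notMem]
      rintro x ⟨hx0, hxU⟩
      obtain ⟨i, hxi⟩ := Set.mem_iUnion.mp hxU
      exact Set.eq_empty_iff_forall_notMem.mp
        (hdisj2 0 i.succ (Fin.succ_ne_zero i).symm) x ⟨hx0, hxi⟩
    have hh2' : (appendAll D).SG2 ∩ (C 0).SG2neg = ∅ := by
      rw [SG2_appendAll D]
      rw [Set.eq_empty_iff_forall_notMem]
      rintro x ⟨hxU, hx0⟩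
      obtain ⟨i, hxi⟩ := Set.mem_iUnion.mp hxU
      exact Set.eq_empty_iff_forall_notMem.mp
        (hdisj2 i.succ 0 (Fin.succ_ne_zero i)) x ⟨hxi, hx0⟩
    have hh3 : (C 0).SH ∩ (appendAll D).SH = ∅ := by
      rw [SH_appendAll D]
      rw [Set.eq_empty_iff_forall_notMem]
      rintro x ⟨hx0, hxU⟩
      obtain ⟨i, hxi⟩ := Set.mem_iUnion.mp hxU
      exact Set.eq_empty_iff_forall_notMem.mp
        (hdisj3 0 i.succ (Fin.succ_ne_zero i).symm) x ⟨hx0, hxi⟩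
    have two := dsum_mem_closure_two (C 0) (appendAll D) hh1 hh2 hh2' hh3 (hA 0) hm1
    rw [reindex_dsum_reindex h1 (size_append (C 0) (appendAll D)).symm
      (sizes_appendAll C)] at two
    exact ⟨sizes_appendAll C, two⟩
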